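/- Let F be an algebraically closed field of characteristic p > 0 and let L be a finite-dimensional transitive irreducible ℤ-graded Lie algebra over F such that the only ideal of L contained in ⊕_{i<0} L_i is zero. Let I be a nonzero ideal of L contained in every nonzero ideal of L (the unique minimal ideal), and suppose I ∩ L_1 = 0 (the degenerate case). Then L_2 = 0, [[L_{-1}, L_1], L_1] = 0, and [L_{-1}, L_1] = I ∩ L_0. -/

import Mathlib

section aux
variable {F L : Type*} [Field F] [LieRing L] [LieAlgebra F L] (Lgr : ℤ → Submodule F L)

noncomputable def grE (hdirect : DirectSum.IsInternal Lgr) :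
    (DirectSum ℤ fun i => Lgr i) ≃ₗ[F] L :=
  LinearEquiv.ofBijective (DirectSum.coeLinearMap Lgr) hdirect

theorem grE_apply (hdirect : DirectSum.IsInternal Lgr) (v : DirectSum ℤ fun i => Lgr i) :
    grE Lgr hdirect v = DirectSum.coeLinearMap Lgr v := rfl

noncomputable def phi (hdirect : DirectSum.IsInternal Lgr) (t : Fˣ) : L →ₗ[F] L :=
  (DirectSum.coeLinearMap Lgr) ∘ₗ
    (DFinsupp.mapRange.linearMap
      (fun i : ℤ => (((t ^ i : Fˣ) : F) • LinearMap.id : Lgr i →ₗ[F] Lgr i))) ∘ₗ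
    (grE Lgr hdirect).symm.toLinearMap

theorem grE_symm_of_mem (hdirect : DirectSum.IsInternal Lgr) {i : ℤ} {x : L} (hx : x ∈ Lgr i) :
    (grE Lgr hdirect).symm x = DirectSum.of (fun i => Lgr i) i ⟨x, hx⟩ := by
  apply (grE Lgr hdirect).injective
  rw [LinearEquiv.apply_symm_apply, grE_apply, DirectSum.coeLinearMap_of]

theorem phi_apply (hdirect : DirectSum.IsInternal Lgr) (t : Fˣ) (x : L) :
    phi Lgr hdirect t x = DirectSum.coeLinearMap Lgr
      ((DFinsupp.mapRange.linearMap
        (fun i : ℤ => (((t ^ i : Fˣ) : F) • LinearMap.id : Lgr i →ₗ[F] Lgr i)))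
        ((grE Lgr hdirect).symm x)) := rfl

theorem phi_of_mem (hdirect : DirectSum.IsInternal Lgr) (t : Fˣ) {i : ℤ} {x : L} (hx : x ∈ Lgr i) :
    phi Lgr hdirect t x = ((t ^ i : Fˣ) : F) • x := by
  rw [phi_apply, grE_symm_of_mem Lgr hdirect hx]
  rw [show (DirectSum.of (fun i => Lgr i) i ⟨x, hx⟩) = DFinsupp.single i ⟨x, hx⟩ from rfl]
  rw [DFinsupp.mapRange.linearMap_apply, DFinsupp.mapRange_single]
  rw [show (DFinsupp.single i ((((t ^ i : Fˣ) : F) • LinearMap.id : Lgr i →ₗ[F] Lgr i) (⟨x, hx⟩ : Lgr i)))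
      = DirectSum.of (fun i => Lgr i) i (((t ^ i : Fˣ) : F) • ⟨x, hx⟩) from rfl]
  rw [DirectSum.coeLinearMap_of]
  rfl

theorem hom_induction (hdirect : DirectSum.IsInternal Lgr) {P : L → Prop}
    (h0 : P 0) (hadd : ∀ x y, P x → P y → P (x + y))
    (hhom : ∀ i : ℤ, ∀ x ∈ Lgr i, P x) : ∀ x, P x := by
  intro x
  have hx : x ∈ ⨆ i, Lgr i := by
    rw [hdirect.submodule_iSup_eq_top]; trivial
  exact Submodule.iSup_induction (motive := P) Lgr hx hhom h0 hadd

theorem phi_lie (hdirect : DirectSum.IsInternal Lgr)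
    (hbracket : ∀ i j : ℤ, ∀ x ∈ Lgr i, ∀ y ∈ Lgr j, ⁅x, y⁆ ∈ Lgr (i + j))
    (t : Fˣ) (x y : L) :
    phi Lgr hdirect t ⁅x, y⁆ = ⁅phi Lgr hdirect t x, phi Lgr hdirect t y⁆ := by
  induction x using hom_induction Lgr hdirect with
  | h0 => simp
  | hadd a b ha hb => simp [add_lie, ha, hb]
  | hhom i a ha =>
    induction y using hom_induction Lgr hdirect with
    | h0 => simp
    | hadd c d hc hd => simp [lie_add, hc, hd]
    | hhom j b hb =>
      rw [phi_of_mem Lgr hdirect t ha, phi_of_mem Lgr hdirect t hb,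
        phi_of_mem Lgr hdirect t (hbracket i j a ha b hb)]
      rw [smul_lie, lie_smul, smul_smul, ← Units.val_mul, ← zpow_add]

theorem phi_phi (hdirect : DirectSum.IsInternal Lgr) (t s : Fˣ) (x : L) :
    phi Lgr hdirect t (phi Lgr hdirect s x) = phi Lgr hdirect (t * s) x := by
  induction x using hom_induction Lgr hdirect with
  | h0 => simp
  | hadd a b ha hb => simp [ha, hb]
  | hhom i a ha =>
    rw [phi_of_mem Lgr hdirect s ha, map_smul, phi_of_mem Lgr hdirect t ha,
      phi_of_mem Lgr hdirect (t * s) ha, smul_smul, ← Units.val_mul, ← mul_zpow, mul_comm s t]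

theorem phi_one (hdirect : DirectSum.IsInternal Lgr) (x : L) :
    phi Lgr hdirect 1 x = x := by
  induction x using hom_induction Lgr hdirect with
  | h0 => simp
  | hadd a b ha hb => simp [ha, hb]
  | hhom i a ha => rw [phi_of_mem Lgr hdirect 1 ha]; simp

open scoped Classical in
theorem sum_components (hdirect : DirectSum.IsInternal Lgr) (x : L) :
    x = ∑ i ∈ ((grE Lgr hdirect).symm x).support, (((grE Lgr hdirect).symm x) i : L) := by
  conv_lhs => rw [← (grE Lgr hdirect).apply_symm_apply x]
  rw [grE_apply]
  conv_lhs => rw [← DirectSum.sum_support_of ((grE Lgr hdirect).symm x)]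
  rw [map_sum]
  refine Finset.sum_congr rfl fun i _ => ?_
  rw [DirectSum.coeLinearMap_of]

theorem symm_phi (hdirect : DirectSum.IsInternal Lgr) (t : Fˣ) (x : L) (j : ℤ) :
    ((grE Lgr hdirect).symm (phi Lgr hdirect t x)) j
      = ((t ^ j : Fˣ) : F) • (((grE Lgr hdirect).symm x) j) := by
  have h : (grE Lgr hdirect).symm (phi Lgr hdirect t x)
      = (DFinsupp.mapRange.linearMap
        (fun i : ℤ => (((t ^ i : Fˣ) : F) • LinearMap.id : Lgr i →ₗ[F] Lgr i)))
        ((grE Lgr hdirect).symm x) := by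
    apply (grE Lgr hdirect).injective
    rw [LinearEquiv.apply_symm_apply, phi_apply, grE_apply]
  rw [h, DFinsupp.mapRange.linearMap_apply, DFinsupp.mapRange_apply]
  rfl

end aux



/-- (Degenerate case of Weisfeiler's theorem.)  Let `L` be a finite-dimensional
transitive irreducible `ℤ`-graded Lie algebra over an algebraically closed field `F` of
characteristic `p > 0`, with no nonzero ideal contained in `⊕_{i<0} Lᵢ`, and let `I` be the unique
minimal ideal of `L`.  If `I ∩ L₁ = 0`, then `L₂ = 0`, `[[L₋₁, L₁], L₁] = 0`, and
`[L₋₁, L₁] = I ∩ L₀`. -/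
theorem stmt_4 {F L : Type*} [Field F] [IsAlgClosed F] [LieRing L] [LieAlgebra F L]
    (p : ℕ) [CharP F p] (hp : 0 < p) [FiniteDimensional F L]
    (Lgr : ℤ → Submodule F L)
    (hdirect : DirectSum.IsInternal Lgr)
    (hbracket : ∀ i j : ℤ, ∀ x ∈ Lgr i, ∀ y ∈ Lgr j, ⁅x, y⁆ ∈ Lgr (i + j))
    (htrans : ∀ i : ℤ, 0 ≤ i → ∀ x ∈ Lgr i, (∀ y ∈ Lgr (-1), ⁅x, y⁆ = 0) → x = 0)
    (hne : Lgr (-1) ≠ ⊥)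
    (hirr : ∀ W : Submodule F L, W ≤ Lgr (-1) →
      (∀ z ∈ Lgr 0, ∀ w ∈ W, ⁅z, w⁆ ∈ W) → W = ⊥ ∨ W = Lgr (-1))
    (hgen : ∀ i : ℤ, 1 < i →
      Lgr (-i) = Submodule.span F {m | ∃ x ∈ Lgr (-1), ∃ y ∈ Lgr (-i + 1), m = ⁅x, y⁆})
    (hrad : ∀ J : LieIdeal F L, (J : Submodule F L) ≤ ⨆ i < (0 : ℤ), Lgr i → J = ⊥)
    (I : LieIdeal F L) (hI : I ≠ ⊥) (hImin : ∀ J : LieIdeal F L, J ≠ ⊥ → I ≤ J)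
    (hdeg : (I : Submodule F L) ⊓ Lgr 1 = ⊥) :
    Lgr 2 = ⊥ ∧
      (∀ x ∈ Lgr (-1), ∀ y ∈ Lgr 1, ∀ z ∈ Lgr 1, ⁅⁅x, y⁆, z⁆ = 0) ∧
      Submodule.span F {m | ∃ x ∈ Lgr (-1), ∃ y ∈ Lgr 1, m = ⁅x, y⁆} =
        (I : Submodule F L) ⊓ Lgr 0 := by
  classical
  -- I is nontrivial
  obtain ⟨z₀, hz₀I, hz₀⟩ : ∃ z, z ∈ I ∧ z ≠ 0 := by
    by_contra h
    push_neg at h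
    exact hI (LieSubmodule.eq_bot_iff I |>.mpr fun m hm => h m hm)
  -- φ_t maps I into I
  have hphiI : ∀ (t : Fˣ), ∀ x, x ∈ I → phi Lgr hdirect t x ∈ I := by
    intro t
    set K : LieIdeal F L :=
      { toSubmodule := (I : Submodule F L).comap (phi Lgr hdirect t)
        lie_mem := by
          intro y m hm
          show ⁅y, m⁆ ∈ (I : Submodule F L).comap (phi Lgr hdirect t)
          have hm' : phi Lgr hdirect t m ∈ I := hm
          simp only [Submodule.mem_comap]
          rw [phi_lie Lgr hdirect hbracket]
          exact LieSubmodule.lie_mem I hm' } with hKdef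
    have hmemK : ∀ x, x ∈ K ↔ phi Lgr hdirect t x ∈ I := by
      intro x
      rw [hKdef]
      exact Iff.rfl
    have hKne : K ≠ ⊥ := by
      intro hKbot
      have h1 : phi Lgr hdirect t⁻¹ z₀ ∈ K := by
        rw [hmemK, phi_phi, mul_inv_cancel, phi_one]
        exact hz₀I
      rw [hKbot, LieSubmodule.mem_bot] at h1
      apply hz₀
      have := phi_phi Lgr hdirect t t⁻¹ z₀
      rw [h1, map_zero, mul_inv_cancel, phi_one] at this
      exact this.symm
    intro x hx
    exact (hmemK x).mp (hImin K hKne hx)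
  -- components of elements of I lie in I
  have hcompI : ∀ x, x ∈ I → ∀ j, (((grE Lgr hdirect).symm x) j : L) ∈ I := by
    suffices h : ∀ n : ℕ, ∀ x, x ∈ I → ((grE Lgr hdirect).symm x).support.card ≤ n →
        ∀ j, (((grE Lgr hdirect).symm x) j : L) ∈ I by
      intro x hx j
      exact h _ x hx le_rfl j
    intro n
    induction n with
    | zero =>
      intro x hx hcard j
      have hj : ((grE Lgr hdirect).symm x) j = 0 := by
        by_contra h
        have hjs : j ∈ ((grE Lgr hdirect).symm x).support := DFinsupp.mem_support_iff.mpr h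
        have := Finset.card_pos.mpr ⟨j, hjs⟩
        omega
      rw [hj]
      exact LieSubmodule.zero_mem I
    | succ n ih =>
      intro x hx hcard j
      by_cases hle : ((grE Lgr hdirect).symm x).support.card ≤ n
      · exact ih x hx hle j
      have hcardeq : ((grE Lgr hdirect).symm x).support.card = n + 1 := by omega
      obtain ⟨j₀, hj₀⟩ : ((grE Lgr hdirect).symm x).support.Nonempty := by
        rw [← Finset.card_pos]; omega
      set s := ((grE Lgr hdirect).symm x).support with hs
      set M : ℕ := Finset.sup s (fun k => (k - j₀).natAbs) with hM
      have hp' : p.Prime := (CharP.char_is_prime_or_zero F p).resolve_right (by omega)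
      have hp2 : 2 ≤ p := hp'.two_le
      set N : ℕ := if p ∣ M + 1 then M + 2 else M + 1 with hN
      have hNM : M < N := by
        rw [hN]; split <;> omega
      have hpN : ¬ p ∣ N := by
        rw [hN]
        split
        · rename_i hdvd
          intro h2
          have h3 : p ∣ (M + 2) - (M + 1) := Nat.dvd_sub h2 hdvd
          have h4 : (M + 2) - (M + 1) = 1 := by omega
          rw [h4] at h3
          have := Nat.le_of_dvd one_pos h3
          omega
        · rename_i hdvd
          exact hdvd
      have hNF : (N : F) ≠ 0 := fun h => hpN ((CharP.cast_eq_zero_iff F p N).mp h)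
      haveI : NeZero ((N : F)) := ⟨hNF⟩
      obtain ⟨u, hu⟩ := HasEnoughRootsOfUnity.exists_primitiveRoot F N
      have hN0 : 0 < N := by omega
      obtain ⟨tu, htu⟩ := hu.isUnit hN0.ne'
      have hutu : IsPrimitiveRoot tu N := by
        rw [← IsPrimitiveRoot.coe_units_iff (ζ := tu)]
        rw [htu]; exact hu
      set y := phi Lgr hdirect tu x - ((tu ^ (j₀ : ℤ) : Fˣ) : F) • x with hy
      have hyI : y ∈ I := by
        exact sub_mem (hphiI tu x hx) (SMulMemClass.smul_mem _ hx)
      have hyc : ∀ k : ℤ, (((grE Lgr hdirect).symm y) k : L) =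
          (((tu ^ k : Fˣ) : F) - ((tu ^ (j₀ : ℤ) : Fˣ) : F)) • (((grE Lgr hdirect).symm x) k : L) := by
        intro k
        rw [hy, map_sub, map_smul, DFinsupp.sub_apply, DFinsupp.smul_apply]
        push_cast
        rw [symm_phi]
        push_cast
        rw [sub_smul]
      have hysupp : ((grE Lgr hdirect).symm y).support ⊆ s.erase j₀ := by
        intro k hk
        rw [DFinsupp.mem_support_iff] at hk
        have hk' : (((grE Lgr hdirect).symm y) k : L) ≠ 0 := by
          intro h
          exact hk (Subtype.ext h)
        rw [hyc k] at hk'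
        rw [Finset.mem_erase]
        constructor
        · intro hkj
          apply hk'
          rw [hkj, sub_self, zero_smul]
        · rw [hs, DFinsupp.mem_support_iff]
          intro h
          apply hk'
          rw [h]
          simp
      have hycard : ((grE Lgr hdirect).symm y).support.card ≤ n := by
        have h1 := Finset.card_le_card hysupp
        rw [Finset.card_erase_of_mem hj₀, hcardeq] at h1
        omega
      have hxj : ∀ k : ℤ, k ≠ j₀ → (((grE Lgr hdirect).symm x) k : L) ∈ I := by
        intro k hk
        by_cases hks : k ∈ s
        · have hcoef : ((tu ^ k : Fˣ) : F) - ((tu ^ (j₀ : ℤ) : Fˣ) : F) ≠ 0 := by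
            intro h0
            have h1 : (tu ^ k : Fˣ) = (tu ^ (j₀ : ℤ) : Fˣ) := by
              apply Units.ext
              have := sub_eq_zero.mp h0
              exact_mod_cast this
            have h2 : tu ^ (k - j₀) = 1 := by
              rw [zpow_sub]
              rw [h1]
              rw [mul_inv_cancel]
            have h3 : (N : ℤ) ∣ (k - j₀) := (hutu.zpow_eq_one_iff_dvd _).mp h2
            have h4 : (k - j₀).natAbs ≤ M := by
              rw [hM]
              exact Finset.le_sup (f := fun k => (k - j₀).natAbs) hks
            have h5 : k - j₀ ≠ 0 := fun h => hk (by omega)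
            have h6 : (N : ℤ) ≤ ((k - j₀).natAbs : ℤ) := by
              have h7 := Int.le_of_dvd (abs_pos.mpr h5) ((dvd_abs _ _).mpr h3)
              rwa [Int.abs_eq_natAbs] at h7
            omega
          have h7 := ih y hyI hycard k
          rw [hyc k] at h7
          have h8 := SMulMemClass.smul_mem (((tu ^ k : Fˣ) : F) - ((tu ^ (j₀ : ℤ) : Fˣ) : F))⁻¹ h7
          rw [smul_smul, inv_mul_cancel₀ hcoef, one_smul] at h8
          exact h8
        · have : ((grE Lgr hdirect).symm x) k = 0 := by
            by_contra h
            exact hks (DFinsupp.mem_support_iff.mpr h)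
          rw [this]
          exact LieSubmodule.zero_mem I
      by_cases hjj : j = j₀
      · have hsum := sum_components Lgr hdirect x
        have hxsum : (((grE Lgr hdirect).symm x) j₀ : L) +
            ∑ k ∈ s.erase j₀, (((grE Lgr hdirect).symm x) k : L) = x :=
          (Finset.add_sum_erase s (fun k => (((grE Lgr hdirect).symm x) k : L)) hj₀).trans hsum.symm
        have hgoal : (((grE Lgr hdirect).symm x) j₀ : L) =
            x - ∑ k ∈ s.erase j₀, (((grE Lgr hdirect).symm x) k : L) :=
          eq_sub_of_add_eq hxsum
        rw [hjj, hgoal]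
        exact sub_mem hx (sum_mem fun k hk => hxj k (Finset.mem_erase.mp hk).1)
      · exact hxj j hjj
  -- brackets with I-elements on the left stay in I
  have hIlie : ∀ a : L, a ∈ I → ∀ b : L, ⁅a, b⁆ ∈ I := by
    intro a ha b
    rw [← lie_skew]
    exact neg_mem (LieSubmodule.lie_mem I ha)
  -- I ∩ Lgr j = ⊥ for 1 ≤ j
  have hItop : ∀ j : ℤ, 1 ≤ j → (I : Submodule F L) ⊓ Lgr j = ⊥ := by
    refine Int.le_induction ?_ ?_
    · exact hdeg
    · intro n hn ihn
      rw [Submodule.eq_bot_iff]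
      intro x hxmem
      obtain ⟨hx1, hx2⟩ := Submodule.mem_inf.mp hxmem
      refine htrans (n + 1) (by omega) x hx2 fun y hy => ?_
      have h1 : ⁅x, y⁆ ∈ I := hIlie x hx1 y
      have h2 : ⁅x, y⁆ ∈ Lgr n := by
        have h3 := hbracket (n + 1) (-1) x hx2 y hy
        rwa [show n + 1 + (-1) = n by ring] at h3
      have h5 : ⁅x, y⁆ ∈ (I : Submodule F L) ⊓ Lgr n := Submodule.mem_inf.mpr ⟨h1, h2⟩
      rw [ihn] at h5
      simpa using h5
  -- Lgr (-1) ⊆ I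
  have hneg1 : Lgr (-1) ≤ (I : Submodule F L) := by
    set W : Submodule F L := (I : Submodule F L) ⊓ Lgr (-1) with hW
    have hWinv : ∀ z ∈ Lgr 0, ∀ w ∈ W, ⁅z, w⁆ ∈ W := by
      intro z hz w hw
      obtain ⟨hw1, hw2⟩ := Submodule.mem_inf.mp hw
      refine Submodule.mem_inf.mpr ⟨LieSubmodule.lie_mem I hw1, ?_⟩
      have h3 := hbracket 0 (-1) z hz w hw2
      rwa [show (0:ℤ) + (-1) = -1 by ring] at h3
    rcases hirr W inf_le_right hWinv with hbot | htop
    · exfalso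
      have hI0 : (I : Submodule F L) ⊓ Lgr 0 = ⊥ := by
        rw [Submodule.eq_bot_iff]
        intro x hxm
        obtain ⟨hx1, hx2⟩ := Submodule.mem_inf.mp hxm
        refine htrans 0 le_rfl x hx2 fun y hy => ?_
        have h1 : ⁅x, y⁆ ∈ W := Submodule.mem_inf.mpr ⟨hIlie x hx1 y, by
          have h2 := hbracket 0 (-1) x hx2 y hy
          rwa [show (0:ℤ) + (-1) = -1 by ring] at h2⟩
        rw [hbot] at h1
        simpa using h1
      have hIneg : (I : Submodule F L) ≤ ⨆ i < (0 : ℤ), Lgr i := by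
        intro x hx
        have hsum := sum_components Lgr hdirect x
        have h : (∑ k ∈ ((grE Lgr hdirect).symm x).support, (((grE Lgr hdirect).symm x) k : L))
            ∈ ⨆ i < (0 : ℤ), Lgr i := by
          apply Submodule.sum_mem
          intro k _
          rcases lt_or_ge k 0 with hk | hk
          · exact le_iSup₂ (f := fun i (_ : i < (0:ℤ)) => Lgr i) k hk
              (((grE Lgr hdirect).symm x) k).2
          · have hkI : (((grE Lgr hdirect).symm x) k : L) ∈ (I : Submodule F L) ⊓ Lgr k :=
              Submodule.mem_inf.mpr ⟨hcompI x hx k, (((grE Lgr hdirect).symm x) k).2⟩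
            rcases eq_or_lt_of_le hk with hk0 | hk1
            · subst hk0
              rw [hI0] at hkI
              rw [Submodule.mem_bot] at hkI
              rw [hkI]
              exact Submodule.zero_mem _
            · rw [hItop k (by omega)] at hkI
              rw [Submodule.mem_bot] at hkI
              rw [hkI]
              exact Submodule.zero_mem _
        rwa [← hsum] at h
      exact hI (hrad I hIneg)
    · rw [← htop]
      exact inf_le_left
  have hneg1' : ∀ x ∈ Lgr (-1), x ∈ I := fun x hx => hneg1 hx
  -- Lgr j = ⊥ for 2 ≤ j
  have hG2 : ∀ j : ℤ, 2 ≤ j → Lgr j = ⊥ := by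
    refine Int.le_induction ?_ ?_
    ·
      rw [Submodule.eq_bot_iff]
      intro x hx
      refine htrans 2 (by omega) x hx fun y hy => ?_
      have h1 : ⁅x, y⁆ ∈ I := LieSubmodule.lie_mem I (hneg1' y hy)
      have h2 : ⁅x, y⁆ ∈ Lgr 1 := by
        have h3 := hbracket 2 (-1) x hx y hy
        rwa [show (2:ℤ) + (-1) = 1 by ring] at h3
      have h3 : ⁅x, y⁆ ∈ (I : Submodule F L) ⊓ Lgr 1 := Submodule.mem_inf.mpr ⟨h1, h2⟩
      rw [hdeg] at h3
      simpa using h3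
    · intro n hn ihn
      rw [Submodule.eq_bot_iff]
      intro x hx
      refine htrans (n + 1) (by omega) x hx fun y hy => ?_
      have h2 : ⁅x, y⁆ ∈ Lgr n := by
        have h3 := hbracket (n + 1) (-1) x hx y hy
        rwa [show n + 1 + (-1) = n by ring] at h3
      rw [ihn] at h2
      simpa using h2
  -- second conclusion
  have hconc2 : ∀ x ∈ Lgr (-1), ∀ y ∈ Lgr 1, ∀ z ∈ Lgr 1, ⁅⁅x, y⁆, z⁆ = 0 := by
    intro x hx y hy z hz
    have hxy : ⁅x, y⁆ ∈ I := hIlie x (hneg1' x hx) y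
    have hxy0 : ⁅x, y⁆ ∈ Lgr 0 := by
      have h := hbracket (-1) 1 x hx y hy
      rwa [show (-1:ℤ) + 1 = 0 by ring] at h
    have h1 : ⁅⁅x, y⁆, z⁆ ∈ I := hIlie _ hxy z
    have h2 : ⁅⁅x, y⁆, z⁆ ∈ Lgr 1 := by
      have h := hbracket 0 1 _ hxy0 z hz
      rwa [show (0:ℤ) + 1 = 1 by ring] at h
    have h3 : ⁅⁅x, y⁆, z⁆ ∈ (I : Submodule F L) ⊓ Lgr 1 := Submodule.mem_inf.mpr ⟨h1, h2⟩
    rw [hdeg] at h3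
    simpa using h3
  -- third conclusion
  set T : Submodule F L := Submodule.span F {m | ∃ x ∈ Lgr (-1), ∃ y ∈ Lgr 1, m = ⁅x, y⁆} with hT
  have hTle : T ≤ (I : Submodule F L) ⊓ Lgr 0 := by
    rw [hT, Submodule.span_le]
    rintro m ⟨x, hx, y, hy, rfl⟩
    refine Submodule.mem_inf.mpr ⟨hIlie x (hneg1' x hx) y, ?_⟩
    have h := hbracket (-1) 1 x hx y hy
    rwa [show (-1:ℤ) + 1 = 0 by ring] at h
  set Kneg : Submodule F L := ⨆ i < (0 : ℤ), Lgr i with hKneg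
  have hKnegmem : ∀ k : ℤ, k < 0 → Lgr k ≤ Kneg := by
    intro k hk
    rw [hKneg]
    exact le_iSup₂ (f := fun i (_ : i < (0:ℤ)) => Lgr i) k hk
  set Ksub : Submodule F L := T ⊔ Kneg with hKsub
  have hKlie : ∀ m ∈ Ksub, ∀ x : L, ⁅x, m⁆ ∈ Ksub := by
    set Msub : Submodule F L :=
      { carrier := {m | ∀ x : L, ⁅x, m⁆ ∈ Ksub}
        add_mem' := fun ha hb x => by rw [lie_add]; exact Submodule.add_mem _ (ha x) (hb x)
        zero_mem' := fun x => by rw [lie_zero]; exact Submodule.zero_mem _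
        smul_mem' := fun c m hm x => by rw [lie_smul]; exact Submodule.smul_mem _ c (hm x) }
      with hMsub
    have hTM : T ≤ Msub := by
      rw [hT, Submodule.span_le]
      rintro m ⟨a, ha, b, hb, rfl⟩
      show ∀ x : L, ⁅x, ⁅a, b⁆⁆ ∈ Ksub
      have habI : ⁅a, b⁆ ∈ I := hIlie a (hneg1' a ha) b
      have hab0 : ⁅a, b⁆ ∈ Lgr 0 := by
        have h := hbracket (-1) 1 a ha b hb
        rwa [show (-1:ℤ) + 1 = 0 by ring] at h
      intro x
      induction x using hom_induction Lgr hdirect with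
      | h0 => rw [zero_lie]; exact Submodule.zero_mem _
      | hadd u v hu hv => rw [add_lie]; exact Submodule.add_mem _ hu hv
      | hhom i x hxi =>
        rcases lt_trichotomy i 0 with hi | hi | hi
        · apply Submodule.mem_sup_right
          apply hKnegmem i hi
          have h := hbracket i 0 x hxi _ hab0
          rwa [add_zero] at h
        · subst hi
          rw [leibniz_lie]
          apply Submodule.add_mem
          · apply Submodule.mem_sup_left
            apply Submodule.subset_span
            refine ⟨⁅x, a⁆, ?_, b, hb, rfl⟩
            have h := hbracket 0 (-1) x hxi a ha
            rwa [show (0:ℤ) + (-1) = -1 by ring] at h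
          · apply Submodule.mem_sup_left
            apply Submodule.subset_span
            refine ⟨a, ha, ⁅x, b⁆, ?_, rfl⟩
            have h := hbracket 0 1 x hxi b hb
            rwa [show (0:ℤ) + 1 = 1 by ring] at h
        · rcases eq_or_lt_of_le (by omega : (1:ℤ) ≤ i) with hi1 | hi2
          · have h1 : ⁅x, ⁅a, b⁆⁆ ∈ I := LieSubmodule.lie_mem I habI
            have h2 : ⁅x, ⁅a, b⁆⁆ ∈ Lgr 1 := by
              have h := hbracket i 0 x hxi _ hab0
              rwa [add_zero, ← hi1] at h
            have h3 : ⁅x, ⁅a, b⁆⁆ ∈ (I : Submodule F L) ⊓ Lgr 1 := Submodule.mem_inf.mpr ⟨h1, h2⟩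
            rw [hdeg, Submodule.mem_bot] at h3
            rw [h3]
            exact Submodule.zero_mem _
          · have hx0 : x = 0 := by
              have h := hG2 i (by omega)
              rw [h] at hxi
              simpa using hxi
            rw [hx0, zero_lie]
            exact Submodule.zero_mem _
    have hKM : Kneg ≤ Msub := by
      rw [hKneg]
      refine iSup₂_le fun j hj => ?_
      intro m hm
      show ∀ x : L, ⁅x, m⁆ ∈ Ksub
      intro x
      induction x using hom_induction Lgr hdirect with
      | h0 => rw [zero_lie]; exact Submodule.zero_mem _
      | hadd u v hu hv => rw [add_lie]; exact Submodule.add_mem _ hu hv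
      | hhom i x hxi =>
        rcases lt_trichotomy (i + j) 0 with hij | hij | hij
        · apply Submodule.mem_sup_right
          exact hKnegmem (i + j) hij (hbracket i j x hxi m hm)
        · rcases eq_or_lt_of_le (by omega : (1:ℤ) ≤ i) with hi1 | hi2
          · have hj1 : j = -1 := by omega
            have hm1 : m ∈ Lgr (-1) := by rwa [hj1] at hm
            have hx1 : x ∈ Lgr 1 := by rwa [← hi1] at hxi
            apply Submodule.mem_sup_left
            rw [← lie_skew]
            apply Submodule.neg_mem
            apply Submodule.subset_span
            exact ⟨m, hm1, x, hx1, rfl⟩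
          · have hx0 : x = 0 := by
              have h := hG2 i (by omega)
              rw [h] at hxi
              simpa using hxi
            rw [hx0, zero_lie]
            exact Submodule.zero_mem _
        · have hx0 : x = 0 := by
            have h := hG2 i (by omega)
            rw [h] at hxi
            simpa using hxi
          rw [hx0, zero_lie]
          exact Submodule.zero_mem _
    exact fun m hm x => (sup_le hTM hKM : Ksub ≤ Msub) hm x
  set K : LieIdeal F L := { toSubmodule := Ksub, lie_mem := fun {x m} hm => hKlie m hm x } with hK
  have hKmem : ∀ x : L, x ∈ K ↔ x ∈ Ksub := fun x => Iff.rfl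
  have hKne : K ≠ ⊥ := by
    obtain ⟨z, hz, hz0⟩ := (Submodule.ne_bot_iff _).mp hne
    intro hbot
    have hzK : z ∈ K := (hKmem z).mpr (Submodule.mem_sup_right (hKnegmem (-1) (by omega) hz))
    rw [hbot, LieSubmodule.mem_bot] at hzK
    exact hz0 hzK
  have hIK : ∀ x ∈ I, x ∈ Ksub := fun x hx => (hKmem x).mp (hImin K hKne hx)
  have hconc3 : T = (I : Submodule F L) ⊓ Lgr 0 := by
    refine le_antisymm hTle ?_
    intro x hx
    obtain ⟨hx1, hx2⟩ := Submodule.mem_inf.mp hx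
    obtain ⟨u, hu, v, hv, huv⟩ := Submodule.mem_sup.mp (hIK x hx1)
    have hu0 : u ∈ Lgr 0 := (Submodule.mem_inf.mp (hTle hu)).2
    have hvT : v = x - u := eq_sub_of_add_eq' huv
    have hv0 : v ∈ Lgr 0 := by
      rw [hvT]
      exact Submodule.sub_mem _ hx2 hu0
    have hdisj : Disjoint (Lgr 0) Kneg := by
      have hind := hdirect.submodule_iSupIndep
      refine (hind 0).mono_right ?_
      rw [hKneg]
      exact iSup₂_le fun j hj => le_iSup₂ (f := fun i (_ : i ≠ (0:ℤ)) => Lgr i) j (by omega)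
    have hv0' : v = 0 := Submodule.disjoint_def.mp hdisj v hv0 hv
    rw [← huv, hv0', add_zero]
    exact hu
  exact ⟨hG2 2 le_rfl, hconc2, hconc3⟩
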